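/- Let b > 0 and T ≥ 0. There exists a constant C > 0, depending only on b and T, such that for every natural number ℓ ≥ 1 the following holds: if X_1, …, X_{ℓ+1} are independent real random variables on a probability space with X_k exponentially distributed with rate k·b, then ℙ( Σ_{k=1}^{ℓ+1} X_k ≤ T ) ≤ C · ℓ^{−4}. -/

import Mathlib

open MeasureTheory ProbabilityTheory

section
open Real Set

lemma exp_mul_pdf (μ c : ℝ) (hμ : 0 < μ) (hc : 0 ≤ c) (x : ℝ) :
    ENNReal.ofReal (rexp (-c * x)) * exponentialPDF μ x
      = ENNReal.ofReal (μ / (μ + c)) * exponentialPDF (μ + c) x := by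
  rcases lt_or_ge x 0 with hx | hx
  · rw [exponentialPDF_of_neg hx, exponentialPDF_of_neg hx, mul_zero, mul_zero]
  · rw [exponentialPDF_of_nonneg hx, exponentialPDF_of_nonneg hx,
      ← ENNReal.ofReal_mul (exp_pos _).le, ← ENNReal.ofReal_mul (by positivity)]
    congr 1
    have hμc : μ + c ≠ 0 := by positivity
    field_simp
    rw [show -(x*(μ+c)) = -(c*x) + -(x*μ) by ring, Real.exp_add]

lemma measurable_expPDF (r : ℝ) : Measurable (exponentialPDF r) := by
  unfold exponentialPDF
  exact (measurable_exponentialPDFReal r).ennreal_ofReal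

lemma lintegral_exp_pdf (μ c : ℝ) (hμ : 0 < μ) (hc : 0 ≤ c) :
    ∫⁻ x, ENNReal.ofReal (rexp (-c * x)) ∂(volume.withDensity (exponentialPDF μ))
      = ENNReal.ofReal (μ / (μ + c)) := by
  rw [lintegral_withDensity_eq_lintegral_mul _ (measurable_expPDF μ)
    (by fun_prop)]
  simp only [Pi.mul_apply, mul_comm (exponentialPDF μ _)]
  calc ∫⁻ x, ENNReal.ofReal (rexp (-c * x)) * exponentialPDF μ x
      = ∫⁻ x, ENNReal.ofReal (μ / (μ + c)) * exponentialPDF (μ + c) x := by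
        simp_rw [exp_mul_pdf μ c hμ hc]
    _ = ENNReal.ofReal (μ / (μ + c)) := by
        rw [lintegral_const_mul _ (measurable_expPDF _),
          lintegral_exponentialPDF_eq_one (by positivity), mul_one]

lemma mgf_exp_map {Ω : Type} [MeasureSpace Ω] [IsProbabilityMeasure (ℙ : Measure Ω)]
    {X : Ω → ℝ} (hX : Measurable X) {μ : ℝ} (hμ : 0 < μ)
    (hmap : Measure.map X ℙ = volume.withDensity (exponentialPDF μ)) (c : ℝ) (hc : 0 ≤ c) :
    Integrable (fun ω => rexp (-c * X ω)) ℙ ∧ mgf X ℙ (-c) = μ / (μ + c) := by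
  have hmeas : AEStronglyMeasurable (fun x : ℝ => rexp (-c * x)) (Measure.map X ℙ) := by
    exact ((measurable_id.const_mul (-c)).exp).aestronglyMeasurable
  have hint : Integrable (fun x => rexp (-c * x)) (Measure.map X ℙ) := by
    refine ⟨hmeas, ?_⟩
    rw [hasFiniteIntegral_iff_ofReal (ae_of_all _ fun x => (exp_pos _).le), hmap,
      lintegral_exp_pdf μ c hμ hc]
    exact ENNReal.ofReal_lt_top
  refine ⟨(integrable_map_measure hmeas hX.aemeasurable).mp hint, ?_⟩
  rw [mgf, ← integral_map hX.aemeasurable hmeas,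
    integral_eq_lintegral_of_nonneg_ae (ae_of_all _ fun x => (exp_pos _).le) hmeas, hmap,
    lintegral_exp_pdf μ c hμ hc, ENNReal.toReal_ofReal (by positivity)]

lemma prod_ratio (n : ℕ) : ∏ k ∈ Finset.range n, (((k : ℝ) + 1)/((k : ℝ) + 5))
    = 24 / (((n : ℝ) + 1) * ((n : ℝ) + 2) * ((n : ℝ) + 3) * ((n : ℝ) + 4)) := by
  induction n with
  | zero => norm_num
  | succ n ih =>
    rw [Finset.prod_range_succ, ih]
    push_cast
    have h1 : ((n : ℝ) + 1) ≠ 0 := by positivity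
    have h2 : ((n : ℝ) + 2) ≠ 0 := by positivity
    have h3 : ((n : ℝ) + 3) ≠ 0 := by positivity
    have h4 : ((n : ℝ) + 4) ≠ 0 := by positivity
    have h5 : ((n : ℝ) + 5) ≠ 0 := by positivity
    field_simp
    ring


/-- The estimate `P(E⁺_{2ℓ+1}) ≤ C ℓ⁻⁴` from the proof of Proposition 2.3: for `b > 0` and
`T ≥ 0` there is a constant `C > 0` (depending only on `b` and `T`) such that whenever
`X_1, …, X_{ℓ+1}` are independent with `X_k` exponentially distributed with rate `k·b`
(here `X k` for `k : Fin (ℓ+1)` plays the role of `X_{k+1}`, with rate `(k+1)·b`),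
one has `ℙ(∑_{k=1}^{ℓ+1} X_k ≤ T) ≤ C ℓ⁻⁴`. -/
theorem stmt_8 (b T : ℝ) (hb : 0 < b) (hT : 0 ≤ T) :
    ∃ C : ℝ, 0 < C ∧
      ∀ (ℓ : ℕ), 1 ≤ ℓ →
      ∀ (Ω : Type) (_ : MeasureSpace Ω) (_ : IsProbabilityMeasure (ℙ : Measure Ω))
        (X : Fin (ℓ + 1) → Ω → ℝ),
        (∀ k, Measurable (X k)) →
        iIndepFun X ℙ →
        (∀ k : Fin (ℓ + 1),
          Measure.map (X k) ℙ = volume.withDensity (exponentialPDF (((k : ℕ) + 1) * b))) →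
        ℙ {ω | ∑ k : Fin (ℓ + 1), X k ω ≤ T} ≤ ENNReal.ofReal (C / (ℓ : ℝ) ^ 4) := by
  refine ⟨24 * rexp (4 * b * T), by positivity, fun ℓ hℓ Ω _ _ X hmeas hindep hmap => ?_⟩
  have hb4 : (0 : ℝ) ≤ 4 * b := by positivity
  -- per-coordinate mgf facts
  have hk : ∀ k : Fin (ℓ + 1),
      Integrable (fun ω => rexp (-(4 * b) * X k ω)) ℙ ∧
      mgf (X k) ℙ (-(4 * b)) = (((k : ℕ) : ℝ) + 1) * b / ((((k : ℕ) : ℝ) + 1) * b + 4 * b) :=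
    fun k => mgf_exp_map (hmeas k) (by positivity) (hmap k) (4 * b) hb4
  set S : Ω → ℝ := ∑ k : Fin (ℓ + 1), X k with hS
  have hSapp : ∀ ω, S ω = ∑ k : Fin (ℓ + 1), X k ω := fun ω => by
    simp [hS, Finset.sum_apply]
  have hIntS : Integrable (fun ω => rexp (-(4 * b) * S ω)) ℙ :=
    hindep.integrable_exp_mul_sum hmeas (fun k _ => (hk k).1)
  have hcher := measure_le_le_exp_mul_mgf (μ := ℙ) (X := S) (t := -(4 * b)) T
    (by linarith) hIntS
  have hmgf : mgf S ℙ (-(4 * b)) = ∏ k : Fin (ℓ + 1),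
      ((((k : ℕ) : ℝ) + 1) * b / ((((k : ℕ) : ℝ) + 1) * b + 4 * b)) := by
    rw [hS, hindep.mgf_sum hmeas]
    exact Finset.prod_congr rfl fun k _ => (hk k).2
  have hratio : ∀ k : Fin (ℓ + 1),
      (((k : ℕ) : ℝ) + 1) * b / ((((k : ℕ) : ℝ) + 1) * b + 4 * b)
        = (((k : ℕ) : ℝ) + 1) / (((k : ℕ) : ℝ) + 5) := by
    intro k
    rw [show (((k : ℕ) : ℝ) + 1) * b + 4 * b = (((k : ℕ) : ℝ) + 5) * b by ring]
    rw [mul_div_mul_right _ _ hb.ne']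
  have hprod : mgf S ℙ (-(4 * b))
      = 24 / ((((ℓ : ℝ)) + 2) * ((ℓ : ℝ) + 3) * ((ℓ : ℝ) + 4) * ((ℓ : ℝ) + 5)) := by
    rw [hmgf, Finset.prod_congr rfl fun k _ => hratio k, Fin.prod_univ_eq_prod_range
      (fun k => (((k : ℕ) : ℝ) + 1) / (((k : ℕ) : ℝ) + 5)), prod_ratio (ℓ + 1)]
    push_cast; ring_nf
  have hℓR : (1 : ℝ) ≤ (ℓ : ℝ) := by exact_mod_cast hℓ
  have hbound : rexp (- -(4 * b) * T) * mgf S ℙ (-(4 * b))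
      ≤ 24 * rexp (4 * b * T) / (ℓ : ℝ) ^ 4 := by
    rw [hprod, neg_neg, mul_div_assoc' _ 24 _, div_le_div_iff₀ (by positivity) (by positivity)]
    have h4 : ((ℓ : ℝ)) ^ 4 ≤ ((ℓ : ℝ) + 2) * ((ℓ : ℝ) + 3) * ((ℓ : ℝ) + 4) * ((ℓ : ℝ) + 5) := by
      nlinarith [sq_nonneg ((ℓ : ℝ)), hℓR]
    nlinarith [exp_pos (4 * b * T), h4, mul_le_mul_of_nonneg_left h4 (by positivity : (0:ℝ) ≤ 24 * rexp (4*b*T))]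
  have hset : {ω | ∑ k : Fin (ℓ + 1), X k ω ≤ T} = {ω | S ω ≤ T} := by
    ext ω; simp [hSapp]
  rw [hset]
  have hfin : ℙ {ω | S ω ≤ T} ≠ ⊤ := measure_ne_top _ _
  rw [← ENNReal.ofReal_toReal hfin]
  exact ENNReal.ofReal_le_ofReal (hcher.trans hbound)

end
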